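/- Let n ≥ 2 and let G_n = ⋃_{j∈[n]²} B(x_j, 1/(2πn²)) with x_j = (k/(n+1), l/(n+1)), and let μ = L²(G_n)⁻¹ · L²|_{G_n} be the normalized area measure on G_n. Then the 1-energy I₁(μ) = ∬ |x−y|⁻¹ dμ(x)dμ(y) is bounded by an absolute constant independent of n. -/

import Mathlib

open MeasureTheory Set Real
open scoped ENNReal NNReal

noncomputable section

abbrev Plane := EuclideanSpace ℝ (Fin 2)

def mk2 (a b : ℝ) : Plane := (WithLp.equiv 2 (Fin 2 → ℝ)).symm ![a, b]

/-- Orthogonal projection onto direction (cos θ, sin θ). -/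
def proj (θ : ℝ) (x : Plane) : ℝ := x 0 * Real.cos θ + x 1 * Real.sin θ

/-- Favard length. -/
def Fav (E : Set Plane) : ℝ≥0∞ := ∫⁻ θ in Set.Ioo 0 Real.pi, μH[1] (proj θ '' E)

/-- Grid points x_j, j ∈ [n]². -/
def gridPt (n : ℕ) (j : Fin n × Fin n) : Plane :=
  mk2 (((j.1 : ℝ) + 1) / (n + 1)) (((j.2 : ℝ) + 1) / (n + 1))

/-- The circles S_j of radius 1/(2πn²). -/
def gridCircle (n : ℕ) (j : Fin n × Fin n) : Set Plane :=
  Metric.sphere (gridPt n j) (1 / (2 * Real.pi * n ^ 2))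

/-- The closed discs B_j. -/
def gridBall (n : ℕ) (j : Fin n × Fin n) : Set Plane :=
  Metric.closedBall (gridPt n j) (1 / (2 * Real.pi * n ^ 2))

/-- E_n: union of the n² circles. -/
def gridSet (n : ℕ) : Set Plane := ⋃ j, gridCircle n j

/-- The filled-in grid region G_n. -/
def gridRegion (n : ℕ) : Set Plane := ⋃ j, gridBall n j

def rn (n : ℕ) : ℝ := 1 / (2 * Real.pi * n ^ 2)

lemma rn_pos {n : ℕ} (hn : 1 ≤ n) : 0 < rn n := by
  have : (0:ℝ) < n := by exact_mod_cast hn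
  have := Real.pi_pos
  unfold rn; positivity

@[simp] lemma mk2_zero (a b : ℝ) : mk2 a b 0 = a := rfl
@[simp] lemma mk2_one (a b : ℝ) : mk2 a b 1 = b := rfl

lemma dist_grid (n : ℕ) (j k : Fin n × Fin n) :
    dist (gridPt n j) (gridPt n k)
      = √(((j.1:ℝ) - k.1)^2 + ((j.2:ℝ) - k.2)^2) / (n+1) := by
  have hn1 : (0:ℝ) < n + 1 := by positivity
  rw [EuclideanSpace.dist_eq, Fin.sum_univ_two]
  show √(dist (mk2 _ _ 0) (mk2 _ _ 0) ^2 + dist (mk2 _ _ 1) (mk2 _ _ 1) ^2) = _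
  rw [mk2_zero, mk2_one, mk2_zero, mk2_one, Real.dist_eq, Real.dist_eq, sq_abs, sq_abs]
  rw [div_sub_div_same, div_sub_div_same,
    show ((j.1:ℝ) + 1 - ((k.1:ℝ)+1)) = (j.1:ℝ) - k.1 by ring,
    show ((j.2:ℝ) + 1 - ((k.2:ℝ)+1)) = (j.2:ℝ) - k.2 by ring,
    div_pow, div_pow, ← add_div, Real.sqrt_div (by positivity),
    Real.sqrt_sq hn1.le]

lemma abs_one_le {n : ℕ} {j k : Fin n × Fin n} (h : j ≠ k) :
    1 ≤ |(j.1:ℝ) - k.1| + |(j.2:ℝ) - k.2| := by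
  have key : ∀ a b : Fin n, a ≠ b → 1 ≤ |(a:ℝ) - b| := by
    intro a b hab
    have h1 : ((a:ℤ) ≠ (b:ℤ)) := by
      simpa using fun hh => hab (Fin.ext (by exact_mod_cast hh))
    have h2 : 1 ≤ |(a:ℤ) - (b:ℤ)| := Int.one_le_abs (sub_ne_zero.mpr h1)
    have : (1:ℝ) ≤ |((a:ℤ) - (b:ℤ) : ℤ)| := by exact_mod_cast h2
    rwa [Int.cast_abs, Int.cast_sub, Int.cast_natCast, Int.cast_natCast] at this
  rcases Prod.mk.injEq .. ▸ (fun hh => h hh) with _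
  by_cases h1 : j.1 = k.1
  · have h2 : j.2 ≠ k.2 := fun h2 => h (Prod.ext h1 h2)
    have := key _ _ h2
    have := abs_nonneg ((j.1:ℝ) - k.1)
    linarith
  · have := key _ _ h1
    have := abs_nonneg ((j.2:ℝ) - k.2)
    linarith

lemma aux_sq (a b : ℝ) : ((|a|+|b|)/2)^2 ≤ a^2+b^2 := by
  nlinarith [sq_abs a, sq_abs b, sq_nonneg (|a|-|b|), abs_nonneg a, abs_nonneg b]

lemma dist_lb {n : ℕ} (hn : 2 ≤ n) {j k : Fin n × Fin n} (h : j ≠ k) :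
    (|(j.1:ℝ) - k.1| + |(j.2:ℝ) - k.2|) / (4*(n+1))
      ≤ dist (gridPt n j) (gridPt n k) - 2 * rn n := by
  set p := (j.1:ℝ) - k.1
  set q := (j.2:ℝ) - k.2
  have h1 : 1 ≤ |p| + |q| := abs_one_le h
  have hn2 : (2:ℝ) ≤ n := by exact_mod_cast hn
  have hd : √(p^2+q^2) ≥ (|p| + |q|)/2 := by
    have h2 := Real.sqrt_le_sqrt (aux_sq p q)
    rwa [Real.sqrt_sq (by positivity)] at h2
  have hr : 2 * rn n ≤ (|p| + |q|) / (4*(n+1)) := by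
    have hπ := Real.pi_gt_three
    have h2 : 2 * rn n = 1 / (Real.pi * n^2) := by unfold rn; field_simp
    rw [h2, div_le_div_iff₀ (by positivity) (by positivity)]
    have : Real.pi * n^2 ≥ 3 * n^2 := by nlinarith
    nlinarith
  have hD : (|p| + |q|) / (2*(n+1)) ≤ dist (gridPt n j) (gridPt n k) := by
    rw [dist_grid, div_le_div_iff₀ (by positivity) (by positivity)]
    nlinarith [hd, abs_nonneg p, abs_nonneg q]
  have : (|p|+|q|)/(4*(n+1)) + (|p|+|q|)/(4*(n+1)) = (|p|+|q|)/(2*(n+1)) := by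
    rw [← add_div, div_eq_div_iff (by positivity) (by positivity)]; ring
  linarith

lemma dist_sub_pos {n : ℕ} (hn : 2 ≤ n) {j k : Fin n × Fin n} (h : j ≠ k) :
    0 < dist (gridPt n j) (gridPt n k) - 2 * rn n := by
  have := dist_lb hn h
  have h1 := abs_one_le h
  have hn0 : (0:ℝ) < n + 1 := by positivity
  have : (0:ℝ) < (|(j.1:ℝ) - k.1| + |(j.2:ℝ) - k.2|) / (4*(n+1)) := by positivity
  linarith [dist_lb hn h]

lemma vol_cb (x : Plane) (t : ℝ) :
    volume (Metric.closedBall x t) = ENNReal.ofReal t ^ 2 * ENNReal.ofReal π := by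
  rw [EuclideanSpace.volume_closedBall]
  congr 2
  rw [Fintype.card_fin, show ((2:ℕ):ℝ)/2 + 1 = 2 by norm_num, Real.Gamma_two,
      Real.sq_sqrt Real.pi_pos.le, div_one]

lemma gridBall_eq (n : ℕ) (j : Fin n × Fin n) :
    gridBall n j = Metric.closedBall (gridPt n j) (rn n) := rfl

lemma vol_gridBall (n : ℕ) (j : Fin n × Fin n) :
    volume (gridBall n j) = ENNReal.ofReal (rn n) ^ 2 * ENNReal.ofReal π :=
  vol_cb _ _

lemma grid_disjoint {n : ℕ} (hn : 2 ≤ n) :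
    Pairwise (Function.onFun Disjoint (gridBall n)) := by
  intro j k hjk
  rw [Function.onFun, gridBall_eq, gridBall_eq]
  apply Metric.closedBall_disjoint_closedBall
  have := dist_sub_pos hn hjk
  linarith

lemma vol_region {n : ℕ} (hn : 2 ≤ n) :
    volume (gridRegion n) = ENNReal.ofReal (rn n / 2) := by
  have hn0 : (0:ℝ) < n := by exact_mod_cast Nat.lt_of_lt_of_le Nat.zero_lt_two hn
  rw [gridRegion, measure_iUnion (grid_disjoint hn)
    (fun j => measurableSet_closedBall), tsum_fintype]
  simp only [vol_gridBall]
  rw [Finset.sum_const, Finset.card_univ, Fintype.card_prod, Fintype.card_fin,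
    nsmul_eq_mul]
  have hc : ((n * n : ℕ) : ℝ≥0∞) = ENNReal.ofReal ((n:ℝ) * n) := by
    rw [← ENNReal.ofReal_natCast]; push_cast; ring_nf
  rw [hc, ← ENNReal.ofReal_pow (rn_pos (by omega)).le,
    ← ENNReal.ofReal_mul (by positivity), ← ENNReal.ofReal_mul (by positivity)]
  congr 1
  have hπ := Real.pi_pos
  rw [rn]
  field_simp

lemma sqrt_sum (n : ℕ) : ∑ m ∈ Finset.range n, (√((m:ℝ)+1))⁻¹ ≤ 2 * √n := by
  induction n with
  | zero => simp
  | succ n ih =>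
    rw [Finset.sum_range_succ]
    have hb : (0:ℝ) < √((n:ℝ)+1) := Real.sqrt_pos.mpr (by positivity)
    have ha : (0:ℝ) ≤ √(n:ℝ) := Real.sqrt_nonneg _
    have hA : (√(n:ℝ))^2 = (n:ℝ) := Real.sq_sqrt (by positivity)
    have hB : (√((n:ℝ)+1))^2 = (n:ℝ)+1 := Real.sq_sqrt (by positivity)
    have hab : √(n:ℝ) * √((n:ℝ)+1) ≤ (n:ℝ) + 1/2 := by
      nlinarith [sq_nonneg (√(n:ℝ) * √((n:ℝ)+1) - ((n:ℝ)+1/2)), sq_nonneg (√(n:ℝ) - √((n:ℝ)+1))]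
    have key : (√((n:ℝ)+1))⁻¹ ≤ 2*√((n:ℝ)+1) - 2*√(n:ℝ) := by
      rw [inv_le_iff_one_le_mul₀ hb]
      nlinarith
    have hc : ((n:ℝ)+1) = ((n+1:ℕ):ℝ) := by push_cast; ring
    rw [← hc] at *
    linarith

lemma row_sum (n : ℕ) (p : Fin n) :
    ∑ q : Fin n, (√(|(p:ℝ) - (q:ℝ)| + 1))⁻¹ ≤ 4 * √n := by
  have hpn : (p:ℕ) < n := p.isLt
  rw [Fin.sum_univ_eq_sum_range (fun q => (√(|(p:ℝ) - (q:ℝ)| + 1))⁻¹) n]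
  have hsplit : Finset.range n = Finset.range ((p:ℕ)+1) ∪ Finset.Ico ((p:ℕ)+1) n := by
    rw [Finset.range_eq_Ico, Finset.range_eq_Ico]
    exact (Finset.Ico_union_Ico_eq_Ico (a := 0) (b := (p:ℕ)+1) (c := n) (by omega) (by omega)).symm
  rw [hsplit, Finset.sum_union (by
    rw [Finset.range_eq_Ico]
    exact Finset.Ico_disjoint_Ico_consecutive 0 _ _)]
  have h1 : ∑ q ∈ Finset.range ((p:ℕ)+1), (√(|(p:ℝ) - (q:ℝ)| + 1))⁻¹
      ≤ 2 * √n := by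
    have he : ∀ q ∈ Finset.range ((p:ℕ)+1),
        (√(|(p:ℝ) - (q:ℝ)| + 1))⁻¹ = (√((((p:ℕ) - q : ℕ):ℝ) + 1))⁻¹ := by
      intro q hq
      rw [Finset.mem_range] at hq
      congr 3
      rw [Nat.cast_sub (by omega), abs_of_nonneg (by
        have : (q:ℝ) ≤ (p:ℝ) := by exact_mod_cast Nat.lt_succ_iff.mp hq
        linarith)]
    rw [Finset.sum_congr rfl he]
    have hrefl := Finset.sum_range_reflect (fun m => (√((m:ℝ) + 1))⁻¹) ((p:ℕ)+1)
    have : ∑ q ∈ Finset.range ((p:ℕ)+1), (√((((p:ℕ) - q : ℕ):ℝ) + 1))⁻¹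
        = ∑ m ∈ Finset.range ((p:ℕ)+1), (√((m:ℝ) + 1))⁻¹ := by
      rw [← hrefl]
      refine Finset.sum_congr rfl fun q hq => ?_
      have h9 : (p:ℕ) + 1 - 1 - q = (p:ℕ) - q := by omega
      rw [h9]
    rw [this]
    calc ∑ m ∈ Finset.range ((p:ℕ)+1), (√((m:ℝ) + 1))⁻¹
        ≤ ∑ m ∈ Finset.range n, (√((m:ℝ) + 1))⁻¹ := by
          apply Finset.sum_le_sum_of_subset_of_nonneg
          · exact Finset.range_subset_range.mpr (by omega)
          · intro i _ _; positivity
      _ ≤ 2 * √n := sqrt_sum n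
  have h2 : ∑ q ∈ Finset.Ico ((p:ℕ)+1) n, (√(|(p:ℝ) - (q:ℝ)| + 1))⁻¹
      ≤ 2 * √n := by
    rw [Finset.sum_Ico_eq_sum_range]
    calc ∑ m ∈ Finset.range (n - ((p:ℕ)+1)), (√(|(p:ℝ) - (((p:ℕ)+1+m : ℕ):ℝ)| + 1))⁻¹
        ≤ ∑ m ∈ Finset.range (n - ((p:ℕ)+1)), (√((m:ℝ) + 1))⁻¹ := by
          refine Finset.sum_le_sum fun m _ => ?_
          have habs : |(p:ℝ) - (((p:ℕ)+1+m : ℕ):ℝ)| = (m:ℝ) + 1 := by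
            push_cast
            rw [abs_of_nonpos (by linarith)]
            ring
          rw [habs]
          apply inv_anti₀
          · positivity
          · apply Real.sqrt_le_sqrt; linarith
      _ ≤ ∑ m ∈ Finset.range n, (√((m:ℝ) + 1))⁻¹ := by
          apply Finset.sum_le_sum_of_subset_of_nonneg
          · exact Finset.range_subset_range.mpr (by omega)
          · intro i _ _; positivity
      _ ≤ 2 * √n := sqrt_sum n
  linarith

lemma aux2 {s t : ℝ} (hs : 0 ≤ s) (ht : 0 ≤ t) (h : 1 ≤ s + t) :
    (s+t)⁻¹ ≤ 2 * ((√(s+1))⁻¹ * (√(t+1))⁻¹) := by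
  have hst : (0:ℝ) < s + t := by linarith
  have hsq : √(s+1) * √(t+1) ≤ 2*(s+t) := by
    rw [← Real.sqrt_mul (by linarith)]
    calc √((s+1)*(t+1)) ≤ √((2*(s+t))^2) := by
          apply Real.sqrt_le_sqrt; nlinarith
      _ = 2*(s+t) := Real.sqrt_sq (by linarith)
  have hpos : (0:ℝ) < √(s+1) * √(t+1) := by positivity
  have h2 := inv_anti₀ hpos hsq
  rw [mul_inv] at h2
  have h4 : (√(s+1))⁻¹ * (√(t+1))⁻¹ = (√(s+1) * √(t+1))⁻¹ := (mul_inv _ _).symm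
  rw [h4]
  linarith [h2]

lemma offdiag_real {n : ℕ} (hn : 2 ≤ n) {j k : Fin n × Fin n} (h : j ≠ k) :
    (dist (gridPt n j) (gridPt n k) - 2 * rn n)⁻¹
      ≤ 8*((n:ℝ)+1) * ((√(|(j.1:ℝ) - (k.1:ℝ)|+1))⁻¹ * (√(|(j.2:ℝ) - (k.2:ℝ)|+1))⁻¹) := by
  set p := (j.1:ℝ) - (k.1:ℝ)
  set q := (j.2:ℝ) - (k.2:ℝ)
  have h1 : 1 ≤ |p| + |q| := abs_one_le h
  have hn0 : (0:ℝ) < n + 1 := by positivity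
  have hlb := dist_lb hn h
  have hpos : (0:ℝ) < (|p| + |q|) / (4*(n+1)) := by positivity
  have step1 : (dist (gridPt n j) (gridPt n k) - 2 * rn n)⁻¹
      ≤ ((|p| + |q|) / (4*(n+1)))⁻¹ := inv_anti₀ hpos hlb
  have step2 : ((|p| + |q|) / (4*(n+1)))⁻¹ = 4*((n:ℝ)+1) * (|p|+|q|)⁻¹ := by
    rw [inv_div]; ring
  have step3 := aux2 (abs_nonneg p) (abs_nonneg q) h1
  calc (dist (gridPt n j) (gridPt n k) - 2 * rn n)⁻¹
      ≤ 4*((n:ℝ)+1) * (|p|+|q|)⁻¹ := by rw [← step2]; exact step1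
    _ ≤ 4*((n:ℝ)+1) * (2 * ((√(|p|+1))⁻¹ * (√(|q|+1))⁻¹)) := by
        apply mul_le_mul_of_nonneg_left step3 (by positivity)
    _ = 8*((n:ℝ)+1) * ((√(|p|+1))⁻¹ * (√(|q|+1))⁻¹) := by ring

lemma pair_sum (n : ℕ) (j : Fin n × Fin n) :
    ∑ k : Fin n × Fin n,
      (√(|(j.1:ℝ) - (k.1:ℝ)|+1))⁻¹ * (√(|(j.2:ℝ) - (k.2:ℝ)|+1))⁻¹ ≤ 16 * n := by
  rw [Fintype.sum_prod_type]
  have : ∀ k1 : Fin n, ∑ k2 : Fin n,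
      (√(|(j.1:ℝ) - (k1:ℝ)|+1))⁻¹ * (√(|(j.2:ℝ) - (k2:ℝ)|+1))⁻¹
      = (√(|(j.1:ℝ) - (k1:ℝ)|+1))⁻¹ * ∑ k2 : Fin n, (√(|(j.2:ℝ) - (k2:ℝ)|+1))⁻¹ := by
    intro k1; rw [Finset.mul_sum]
  rw [Finset.sum_congr rfl (fun k1 _ => this k1), ← Finset.sum_mul]
  have h1 := row_sum n j.1
  have h2 := row_sum n j.2
  have hs1 : (0:ℝ) ≤ ∑ k1 : Fin n, (√(|(j.1:ℝ) - (k1:ℝ)|+1))⁻¹ :=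
    Finset.sum_nonneg fun i _ => by positivity
  have hs2 : (0:ℝ) ≤ ∑ k2 : Fin n, (√(|(j.2:ℝ) - (k2:ℝ)|+1))⁻¹ :=
    Finset.sum_nonneg fun i _ => by positivity
  calc (∑ k1 : Fin n, (√(|(j.1:ℝ) - (k1:ℝ)|+1))⁻¹) * ∑ k2 : Fin n, (√(|(j.2:ℝ) - (k2:ℝ)|+1))⁻¹
      ≤ (4*√n) * (4*√n) := by
        apply mul_le_mul h1 h2 hs2 (by positivity)
    _ = 16 * ((√n)*(√n)) := by ring
    _ = 16 * n := by rw [Real.mul_self_sqrt (by positivity)]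

lemma ballint (x : Plane) {ρ : ℝ} (hρ : 0 < ρ) :
    ∫⁻ y in Metric.closedBall x ρ, (edist x y)⁻¹ ∂volume ≤ ENNReal.ofReal (4 * π * ρ) := by
  set A : ℕ → Set Plane := fun k =>
    Metric.closedBall x (ρ/2^k) \ Metric.closedBall x (ρ/2^(k+1)) with hA
  have hsub : Metric.closedBall x ρ ⊆ {x} ∪ ⋃ k, A k := by
    intro y hy
    rcases eq_or_ne y x with h | h
    · exact Or.inl h
    · refine Or.inr ?_
      have hd : 0 < dist y x := dist_pos.mpr h
      have hdρ : dist y x ≤ ρ := hy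
      have hex : ∃ k : ℕ, ρ/2^(k+1) < dist y x := by
        obtain ⟨m, hm⟩ := pow_unbounded_of_one_lt (ρ / dist y x) (by norm_num : (1:ℝ) < 2)
        refine ⟨m, ?_⟩
        rw [div_lt_iff₀ (by positivity : (0:ℝ) < 2^(m+1))]
        rw [div_lt_iff₀ hd] at hm
        have hp : (2:ℝ)^(m+1) = 2*2^m := by ring
        nlinarith [pow_pos (by norm_num : (0:ℝ) < 2) m]
      classical
      let k := Nat.find hex
      refine mem_iUnion.mpr ⟨k, ?_, ?_⟩
      · show dist y x ≤ ρ/2^k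
        rcases Nat.eq_zero_or_pos k with hk | hk
        · simpa [hk] using hdρ
        · obtain ⟨j, hj⟩ := Nat.exists_eq_succ_of_ne_zero hk.ne'
          have := Nat.find_min hex (m := j) (by omega)
          push_neg at this
          simpa [hj] using this
      · show ¬ dist y x ≤ ρ/2^(k+1)
        exact not_le.mpr (Nat.find_spec hex)
  calc ∫⁻ y in Metric.closedBall x ρ, (edist x y)⁻¹ ∂volume
      ≤ ∫⁻ y in {x} ∪ ⋃ k, A k, (edist x y)⁻¹ ∂volume := lintegral_mono_set hsub
    _ ≤ (∫⁻ y in {x}, (edist x y)⁻¹ ∂volume) + ∫⁻ y in ⋃ k, A k, (edist x y)⁻¹ ∂volume :=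
        lintegral_union_le _ _ _
    _ ≤ 0 + ∑' k, ∫⁻ y in A k, (edist x y)⁻¹ ∂volume := by
        gcongr
        · exact le_of_eq (setLIntegral_measure_zero _ _ (measure_singleton x))
        · exact lintegral_iUnion_le _ _
    _ ≤ ∑' k, ENNReal.ofReal (2*π*ρ) * ENNReal.ofReal (2⁻¹) ^ k := by
        rw [zero_add]
        refine ENNReal.tsum_le_tsum fun k => ?_
        have hb : ∀ y ∈ A k, (edist x y)⁻¹ ≤ ENNReal.ofReal (2^(k+1)/ρ) := by
          intro y hy
          have h1 : ρ/2^(k+1) < dist y x := not_le.mp hy.2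
          have h2 : (0:ℝ) < ρ/2^(k+1) := by positivity
          have : ENNReal.ofReal (ρ/2^(k+1)) ≤ edist x y := by
            rw [edist_dist, dist_comm]
            exact ENNReal.ofReal_le_ofReal h1.le
          calc (edist x y)⁻¹ ≤ (ENNReal.ofReal (ρ/2^(k+1)))⁻¹ := ENNReal.inv_le_inv.mpr this
            _ = ENNReal.ofReal ((ρ/2^(k+1))⁻¹) := (ENNReal.ofReal_inv_of_pos h2).symm
            _ = ENNReal.ofReal (2^(k+1)/ρ) := by rw [inv_div]
        calc ∫⁻ y in A k, (edist x y)⁻¹ ∂volume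
            ≤ ∫⁻ _ in A k, ENNReal.ofReal (2^(k+1)/ρ) ∂volume := by
              refine setLIntegral_mono' ?_ hb
              exact (measurableSet_closedBall).diff measurableSet_closedBall
          _ = ENNReal.ofReal (2^(k+1)/ρ) * volume (A k) := setLIntegral_const _ _
          _ ≤ ENNReal.ofReal (2^(k+1)/ρ) * volume (Metric.closedBall x (ρ/2^k)) := by
              gcongr
              exact diff_subset
          _ = ENNReal.ofReal (2*π*ρ) * ENNReal.ofReal (2⁻¹) ^ k := by
              rw [vol_cb, ← ENNReal.ofReal_pow (by positivity), ← ENNReal.ofReal_mul (by positivity),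
                ← ENNReal.ofReal_mul (by positivity), ← ENNReal.ofReal_pow (by norm_num),
                ← ENNReal.ofReal_mul (by positivity)]
              congr 1
              field_simp
              rw [one_div_pow, mul_one_div, eq_div_iff (by positivity)]; ring
    _ = ENNReal.ofReal (2*π*ρ) * 2 := by
        rw [ENNReal.tsum_mul_left, ENNReal.tsum_geometric]
        congr 1
        have h2 : ENNReal.ofReal (2⁻¹) = 2⁻¹ := by
          rw [ENNReal.ofReal_inv_of_pos (by norm_num : (0:ℝ) < 2)]; norm_num
        rw [h2, ENNReal.one_sub_inv_two, inv_inv]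
    _ = ENNReal.ofReal (4*π*ρ) := by
        rw [show (2:ℝ≥0∞) = ENNReal.ofReal 2 by norm_num, ← ENNReal.ofReal_mul (by positivity)]
        ring_nf

def cB (n : ℕ) : ℝ≥0∞ := ENNReal.ofReal (rn n) ^ 2 * ENNReal.ofReal π

def beta (n : ℕ) (j k : Fin n × Fin n) : ℝ≥0∞ :=
  if j = k then ENNReal.ofReal (4*π*(2*rn n))
  else ENNReal.ofReal ((dist (gridPt n j) (gridPt n k) - 2*rn n)⁻¹) * cB n

lemma cB_eq (n : ℕ) (hn : 2 ≤ n) : cB n = ENNReal.ofReal ((rn n)^2*π) := by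
  have hr : 0 < rn n := rn_pos (by omega)
  have hπ := Real.pi_pos
  rw [cB, ← ENNReal.ofReal_pow hr.le, ← ENNReal.ofReal_mul (by positivity)]

lemma potential_bound {n : ℕ} (hn : 2 ≤ n) (jj : Fin n × Fin n) :
    ∀ x ∈ gridBall n jj,
      (∫⁻ y in gridRegion n, (edist x y)⁻¹ ∂volume) ≤ ∑ k, beta n jj k := by
  have hr : 0 < rn n := rn_pos (by omega)
  have hπ := Real.pi_pos
  intro x hx
  have e0 : (∫⁻ y in gridRegion n, (edist x y)⁻¹ ∂volume)
      = ∑' k, ∫⁻ y in gridBall n k, (edist x y)⁻¹ ∂volume :=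
    lintegral_iUnion (fun k => measurableSet_closedBall) (grid_disjoint hn) _
  rw [e0, tsum_fintype]
  apply Finset.sum_le_sum
  intro k _
  by_cases hk : jj = k
  · subst hk
    have hsub2 : gridBall n jj ⊆ Metric.closedBall x (2*rn n) := by
      intro y hy
      have h1 : dist y (gridPt n jj) ≤ rn n := hy
      have h2 : dist x (gridPt n jj) ≤ rn n := hx
      have h3 : dist y x ≤ dist y (gridPt n jj) + dist (gridPt n jj) x := dist_triangle _ _ _
      have h4 : dist (gridPt n jj) x = dist x (gridPt n jj) := dist_comm _ _
      show dist y x ≤ 2*rn n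
      linarith
    calc ∫⁻ y in gridBall n jj, (edist x y)⁻¹ ∂volume
        ≤ ∫⁻ y in Metric.closedBall x (2*rn n), (edist x y)⁻¹ ∂volume :=
          lintegral_mono_set hsub2
      _ ≤ ENNReal.ofReal (4*π*(2*rn n)) := ballint x (by positivity)
      _ = beta n jj jj := by rw [beta]; simp
  · have hd0 := dist_sub_pos hn hk
    have hb : ∀ y ∈ gridBall n k, (edist x y)⁻¹
        ≤ ENNReal.ofReal ((dist (gridPt n jj) (gridPt n k) - 2*rn n)⁻¹) := by
      intro y hy
      have h1 : dist y (gridPt n k) ≤ rn n := hy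
      have h2 : dist x (gridPt n jj) ≤ rn n := hx
      have h3 : dist (gridPt n jj) (gridPt n k) - 2*rn n ≤ dist x y := by
        have t1 : dist (gridPt n jj) (gridPt n k)
            ≤ dist (gridPt n jj) x + dist x (gridPt n k) := dist_triangle _ _ _
        have t2 : dist x (gridPt n k) ≤ dist x y + dist y (gridPt n k) := dist_triangle _ _ _
        have t3 : dist (gridPt n jj) x = dist x (gridPt n jj) := dist_comm _ _
        linarith
      have h4 : ENNReal.ofReal (dist (gridPt n jj) (gridPt n k) - 2*rn n) ≤ edist x y := by
        rw [edist_dist]; exact ENNReal.ofReal_le_ofReal h3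
      calc (edist x y)⁻¹
          ≤ (ENNReal.ofReal (dist (gridPt n jj) (gridPt n k) - 2*rn n))⁻¹ :=
            ENNReal.inv_le_inv.mpr h4
        _ = ENNReal.ofReal ((dist (gridPt n jj) (gridPt n k) - 2*rn n)⁻¹) :=
            (ENNReal.ofReal_inv_of_pos hd0).symm
    calc ∫⁻ y in gridBall n k, (edist x y)⁻¹ ∂volume
        ≤ ∫⁻ _ in gridBall n k,
            ENNReal.ofReal ((dist (gridPt n jj) (gridPt n k) - 2*rn n)⁻¹) ∂volume :=
          setLIntegral_mono' measurableSet_closedBall hb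
      _ = ENNReal.ofReal ((dist (gridPt n jj) (gridPt n k) - 2*rn n)⁻¹)
            * volume (gridBall n k) := setLIntegral_const _ _
      _ = beta n jj k := by rw [beta, vol_gridBall, if_neg hk, cB]

lemma stepB {n : ℕ} (hn : 2 ≤ n) :
    (∫⁻ x in gridRegion n, ∫⁻ y in gridRegion n, (edist x y)⁻¹ ∂volume ∂volume)
      ≤ (∑ j, ∑ k, beta n j k) * cB n := by
  have e1 : (∫⁻ x in gridRegion n, ∫⁻ y in gridRegion n, (edist x y)⁻¹ ∂volume ∂volume)
      = ∑' j, ∫⁻ x in gridBall n j, ∫⁻ y in gridRegion n, (edist x y)⁻¹ ∂volume ∂volume :=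
    lintegral_iUnion (fun k => measurableSet_closedBall) (grid_disjoint hn) _
  rw [e1, tsum_fintype]
  calc ∑ j, ∫⁻ x in gridBall n j, ∫⁻ y in gridRegion n, (edist x y)⁻¹ ∂volume ∂volume
      ≤ ∑ j, (∑ k, beta n j k) * cB n := by
        apply Finset.sum_le_sum
        intro j _
        calc ∫⁻ x in gridBall n j, ∫⁻ y in gridRegion n, (edist x y)⁻¹ ∂volume ∂volume
            ≤ ∫⁻ _ in gridBall n j, (∑ k, beta n j k) ∂volume :=
              setLIntegral_mono' measurableSet_closedBall (potential_bound hn j)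
          _ = (∑ k, beta n j k) * volume (gridBall n j) := setLIntegral_const _ _
          _ = (∑ k, beta n j k) * cB n := by rw [vol_gridBall, cB]
    _ = (∑ j, ∑ k, beta n j k) * cB n := (Finset.sum_mul _ _ _).symm

lemma hrow {n : ℕ} (hn : 2 ≤ n) (j : Fin n × Fin n) :
    ∑ k, beta n j k ≤ ENNReal.ofReal (4*π*(2*rn n))
      + ENNReal.ofReal (128*(n:ℝ)*((n:ℝ)+1)) * ENNReal.ofReal ((rn n)^2*π) := by
  have hπ := Real.pi_pos
  set U : Fin n × Fin n → ℝ≥0∞ := fun k => ENNReal.ofReal (8*((n:ℝ)+1)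
      * ((√(|(j.1:ℝ) - (k.1:ℝ)|+1))⁻¹ * (√(|(j.2:ℝ) - (k.2:ℝ)|+1))⁻¹)) with hU
  rw [← Finset.add_sum_erase Finset.univ (beta n j) (Finset.mem_univ j)]
  gcongr
  · rw [beta]; simp
  · have hterm : ∀ k ∈ Finset.univ.erase j, beta n j k ≤ U k * cB n := by
      intro k hk
      have hkj : j ≠ k := (Finset.ne_of_mem_erase hk).symm
      rw [beta]
      simp only [if_neg hkj, hU]
      gcongr
      exact offdiag_real hn hkj
    calc ∑ k ∈ Finset.univ.erase j, beta n j k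
        ≤ ∑ k ∈ Finset.univ.erase j, U k * cB n := Finset.sum_le_sum hterm
      _ ≤ ∑ k ∈ Finset.univ, U k * cB n :=
          Finset.sum_le_sum_of_subset (Finset.erase_subset _ _)
      _ = (∑ k : Fin n × Fin n, U k) * cB n := (Finset.sum_mul _ _ _).symm
      _ ≤ ENNReal.ofReal (128*(n:ℝ)*((n:ℝ)+1)) * cB n := by
          gcongr
          rw [hU]
          rw [← ENNReal.ofReal_sum_of_nonneg (fun i _ => by positivity)]
          apply ENNReal.ofReal_le_ofReal
          have hps := pair_sum n j
          calc ∑ k : Fin n × Fin n, 8*((n:ℝ)+1)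
                * ((√(|(j.1:ℝ) - (k.1:ℝ)|+1))⁻¹ * (√(|(j.2:ℝ) - (k.2:ℝ)|+1))⁻¹)
              = 8*((n:ℝ)+1) * ∑ k : Fin n × Fin n,
                ((√(|(j.1:ℝ) - (k.1:ℝ)|+1))⁻¹ * (√(|(j.2:ℝ) - (k.2:ℝ)|+1))⁻¹) := by
                rw [Finset.mul_sum]
            _ ≤ 8*((n:ℝ)+1) * (16*(n:ℝ)) := by
                apply mul_le_mul_of_nonneg_left hps (by positivity)
            _ = 128*(n:ℝ)*((n:ℝ)+1) := by ring
      _ = ENNReal.ofReal (128*(n:ℝ)*((n:ℝ)+1)) * ENNReal.ofReal ((rn n)^2*π) := by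
          rw [cB_eq n hn]

lemma stepC {n : ℕ} (hn : 2 ≤ n) :
    (∑ j : Fin n × Fin n, ∑ k, beta n j k)
      ≤ ENNReal.ofReal ((n:ℝ)*(n:ℝ)*(4*π*(2*rn n))
          + (n:ℝ)*(n:ℝ)*(128*(n:ℝ)*((n:ℝ)+1)*((rn n)^2*π))) := by
  have hπ := Real.pi_pos
  have hr : 0 < rn n := rn_pos (by omega)
  have hs0 : (0:ℝ) < (n:ℝ) := by exact_mod_cast Nat.lt_of_lt_of_le Nat.zero_lt_two hn
  calc (∑ j : Fin n × Fin n, ∑ k, beta n j k)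
      ≤ ∑ _j : Fin n × Fin n, (ENNReal.ofReal (4*π*(2*rn n))
        + ENNReal.ofReal (128*(n:ℝ)*((n:ℝ)+1)) * ENNReal.ofReal ((rn n)^2*π)) :=
        Finset.sum_le_sum (fun j _ => hrow hn j)
    _ = (n*n : ℕ) • (ENNReal.ofReal (4*π*(2*rn n))
        + ENNReal.ofReal (128*(n:ℝ)*((n:ℝ)+1)) * ENNReal.ofReal ((rn n)^2*π)) := by
        rw [Finset.sum_const, Finset.card_univ, Fintype.card_prod, Fintype.card_fin]
    _ = ENNReal.ofReal ((n:ℝ)*(n:ℝ)) * (ENNReal.ofReal (4*π*(2*rn n))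
        + ENNReal.ofReal (128*(n:ℝ)*((n:ℝ)+1)) * ENNReal.ofReal ((rn n)^2*π)) := by
        rw [nsmul_eq_mul]
        congr 1
        rw [← ENNReal.ofReal_natCast]
        push_cast
        ring_nf
    _ = ENNReal.ofReal ((n:ℝ)*(n:ℝ)*(4*π*(2*rn n))
        + (n:ℝ)*(n:ℝ)*(128*(n:ℝ)*((n:ℝ)+1)*((rn n)^2*π))) := by
        rw [← ENNReal.ofReal_mul (by positivity),
          ← ENNReal.ofReal_add (by positivity) (by positivity),
          ← ENNReal.ofReal_mul (by positivity)]
        congr 1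
        ring

set_option maxHeartbeats 1000000 in
/-- Uniform 1-energy bound for the normalized area measure on the grid region. -/
theorem stmt17 : ∃ C : ℝ≥0∞, C < ⊤ ∧ ∀ n : ℕ, 2 ≤ n →
    (∫⁻ x, ∫⁻ y, (edist x y)⁻¹
        ∂((volume (gridRegion n))⁻¹ • volume.restrict (gridRegion n))
      ∂((volume (gridRegion n))⁻¹ • volume.restrict (gridRegion n))) ≤ C := by
  refine ⟨ENNReal.ofReal (16*π + 192), ENNReal.ofReal_lt_top, ?_⟩
  intro n hn
  have hs2 : (2:ℝ) ≤ (n:ℝ) := by exact_mod_cast hn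
  have hs0 : (0:ℝ) < (n:ℝ) := by linarith
  have hπ := Real.pi_pos
  have hr : 0 < rn n := rn_pos (by omega)
  have hvol : volume (gridRegion n) = ENNReal.ofReal (rn n/2) := vol_region hn
  have hvol0 : (volume (gridRegion n))⁻¹ = ENNReal.ofReal ((rn n/2)⁻¹) := by
    rw [hvol, ← ENNReal.ofReal_inv_of_pos (by positivity)]
  have hane : (volume (gridRegion n))⁻¹ ≠ ⊤ := by rw [hvol0]; exact ENNReal.ofReal_ne_top
  have stepA : (∫⁻ x, ∫⁻ y, (edist x y)⁻¹
        ∂((volume (gridRegion n))⁻¹ • volume.restrict (gridRegion n))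
      ∂((volume (gridRegion n))⁻¹ • volume.restrict (gridRegion n)))
      = (volume (gridRegion n))⁻¹ * ((volume (gridRegion n))⁻¹ *
        ∫⁻ x in gridRegion n, ∫⁻ y in gridRegion n, (edist x y)⁻¹ ∂volume ∂volume) := by
    simp only [lintegral_smul_measure, smul_eq_mul]
    rw [lintegral_const_mul' _ _ hane]
  rw [stepA, hvol0]
  calc ENNReal.ofReal ((rn n/2)⁻¹) * (ENNReal.ofReal ((rn n/2)⁻¹) *
        ∫⁻ x in gridRegion n, ∫⁻ y in gridRegion n, (edist x y)⁻¹ ∂volume ∂volume)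
      ≤ ENNReal.ofReal ((rn n/2)⁻¹) * (ENNReal.ofReal ((rn n/2)⁻¹) *
        (ENNReal.ofReal ((n:ℝ)*(n:ℝ)*(4*π*(2*rn n))
          + (n:ℝ)*(n:ℝ)*(128*(n:ℝ)*((n:ℝ)+1)*((rn n)^2*π))) * ENNReal.ofReal ((rn n)^2*π))) := by
        gcongr
        calc (∫⁻ x in gridRegion n, ∫⁻ y in gridRegion n, (edist x y)⁻¹ ∂volume ∂volume)
            ≤ (∑ j, ∑ k, beta n j k) * cB n := stepB hn
          _ ≤ _ := by rw [cB_eq n hn]; gcongr; exact stepC hn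
    _ = ENNReal.ofReal ((rn n/2)⁻¹ * ((rn n/2)⁻¹ *
        (((n:ℝ)*(n:ℝ)*(4*π*(2*rn n))
          + (n:ℝ)*(n:ℝ)*(128*(n:ℝ)*((n:ℝ)+1)*((rn n)^2*π))) * ((rn n)^2*π)))) := by
        rw [← ENNReal.ofReal_mul (by positivity), ← ENNReal.ofReal_mul (by positivity),
          ← ENNReal.ofReal_mul (by positivity)]
    _ ≤ ENNReal.ofReal (16*π + 192) := by
        apply ENNReal.ofReal_le_ofReal
        have key : (rn n/2)⁻¹ * ((rn n/2)⁻¹ *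
            (((n:ℝ)*(n:ℝ)*(4*π*(2*rn n))
              + (n:ℝ)*(n:ℝ)*(128*(n:ℝ)*((n:ℝ)+1)*((rn n)^2*π))) * ((rn n)^2*π)))
            = 16*π + 128*((n:ℝ)+1)/(n:ℝ) := by
          rw [rn]
          field_simp
          ring
        rw [key]
        have h9 : 128*((n:ℝ)+1)/(n:ℝ) ≤ 192 := by
          rw [div_le_iff₀ hs0]
          linarith
        linarith
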